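/- arXiv:0707.2662 — 5 statements merged into one kernel-verified Lean document; each statement's English description precedes it below -/
import Mathlib

section
/- Let v be a positive integer, let x be an integer, and let O : ℕ → ℤ be a function such that O(l) = 0 unless l is a divisor of v with l < v. Define c : ℕ → ℤ on positive integers by c(d) = x if v divides d, and c(d) = ∑_{l ∣ d} l·O(l) otherwise. Then for every positive integer k, ∑_{d ∣ k} μ(k/d)·c(d) = k·O(k) + (x − ∑_{l ∣ v} l·O(l)) if k = v, and ∑_{d ∣ k} μ(k/d)·c(d) = k·O(k) if k ≠ v. -/
open Finset ArithmeticFunction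

theorem sum_moebius_divisors_eq (n : ℕ) :
    ∑ d ∈ n.divisors, (moebius d : ℤ) = if n = 1 then 1 else 0 := by
  have h := coe_mul_zeta_apply (f := (moebius : ArithmeticFunction ℤ)) (x := n)
  rw [moebius_mul_coe_zeta] at h
  rw [← h, ArithmeticFunction.one_apply]

/-- Möbius-sum computation of the exponents in the character ξ(g)
in the proof of Theorem 1. -/
theorem moebius_sum_character_exponent
    (v : ℕ) (hv : 0 < v) (x : ℤ) (O : ℕ → ℤ)
    (hO : ∀ l : ℕ, ¬ (l ∣ v ∧ l < v) → O l = 0)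
    (c : ℕ → ℤ)
    (hc_div : ∀ d : ℕ, 0 < d → v ∣ d → c d = x)
    (hc_ndiv : ∀ d : ℕ, 0 < d → ¬ v ∣ d → c d = ∑ l ∈ d.divisors, (l : ℤ) * O l)
    (k : ℕ) (hk : 0 < k) :
    ∑ d ∈ k.divisors, (moebius (k / d) : ℤ) * c d =
      if k = v then (k : ℤ) * O k + (x - ∑ l ∈ v.divisors, (l : ℤ) * O l)
      else (k : ℤ) * O k := by
  set f : ℕ → ℤ := fun l => (l : ℤ) * O l with hf
  set g : ℕ → ℤ := fun d => ∑ l ∈ d.divisors, f l with hg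
  set G : ℤ := ∑ l ∈ v.divisors, f l with hG
  -- Lemma A : if v ∣ d, 0 < d then g d = G
  have lemA : ∀ d : ℕ, 0 < d → v ∣ d → g d = G := by
    intro d hd hvd
    refine (Finset.sum_subset (Nat.divisors_subset_of_dvd hd.ne' hvd) ?_).symm
    intro l hl hnl
    have hlv : ¬ l ∣ v := by
      intro h; exact hnl (Nat.mem_divisors.2 ⟨h, hv.ne'⟩)
    simp [hf, hO l (fun h => hlv h.1)]
  -- rewrite c
  have hc : ∀ d ∈ k.divisors, c d = g d + (if v ∣ d then x - G else 0) := by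
    intro d hd
    have hd0 : 0 < d := Nat.pos_of_mem_divisors hd
    by_cases hvd : v ∣ d
    · rw [hc_div d hd0 hvd, lemA d hd0 hvd, if_pos hvd]; ring
    · rw [hc_ndiv d hd0 hvd, if_neg hvd, add_zero]
  rw [Finset.sum_congr rfl (fun d hd => by rw [hc d hd])]
  have : ∑ d ∈ k.divisors, (moebius (k / d) : ℤ) * (g d + (if v ∣ d then x - G else 0)) =
      (∑ d ∈ k.divisors, (moebius (k / d) : ℤ) * g d) +
      (x - G) * ∑ d ∈ k.divisors, (if v ∣ d then (moebius (k / d) : ℤ) else 0) := by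
    rw [Finset.mul_sum, ← Finset.sum_add_distrib]
    refine Finset.sum_congr rfl fun d _ => ?_
    by_cases hvd : v ∣ d <;> simp [hvd] <;> ring
  rw [this]
  -- Möbius inversion for the first sum
  have hmoeb : ∑ d ∈ k.divisors, (moebius (k / d) : ℤ) * g d = f k := by
    have h1 := (sum_eq_iff_sum_mul_moebius_eq (f := f) (g := g)).mp
      (fun n _ => rfl) k hk
    rw [← h1]
    exact (Nat.sum_divisorsAntidiagonal' (f := fun a b => (moebius a : ℤ) * g b)).symm
  rw [hmoeb]
  -- Second sum
  have hsecond : ∑ d ∈ k.divisors, (if v ∣ d then (moebius (k / d) : ℤ) else 0) =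
      if k = v then 1 else 0 := by
    by_cases hvk : v ∣ k
    · rw [← Nat.sum_div_divisors k (fun d => if v ∣ d then (moebius (k / d) : ℤ) else 0)]
      have step : ∀ d ∈ k.divisors,
          (if v ∣ k / d then (moebius (k / (k / d)) : ℤ) else 0) =
          (if d ∣ k / v then (moebius d : ℤ) else 0) := by
        intro d hd
        have hdk : d ∣ k := (Nat.mem_divisors.1 hd).1
        have h1 : k / (k / d) = d := Nat.div_div_self hdk hk.ne'
        have h2 : v ∣ k / d ↔ d ∣ k / v := by
          rw [Nat.dvd_div_iff_mul_dvd hdk, Nat.dvd_div_iff_mul_dvd hvk, mul_comm]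
        rw [h1]
        by_cases h : v ∣ k / d
        · rw [if_pos h, if_pos (h2.mp h)]
        · rw [if_neg h, if_neg (fun hh => h (h2.mpr hh))]
      rw [Finset.sum_congr rfl step, ← Finset.sum_filter,
        Nat.divisors_filter_dvd_of_dvd hk.ne' (Nat.div_dvd_of_dvd hvk),
        sum_moebius_divisors_eq]
      congr 1
      simp [Nat.div_eq_iff_eq_mul_left hv hvk, eq_comm]
    · have hkv : k ≠ v := fun h => hvk (h ▸ dvd_refl v)
      rw [if_neg hkv]
      refine Finset.sum_eq_zero fun d hd => ?_
      have hdk : d ∣ k := (Nat.mem_divisors.1 hd).1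
      rw [if_neg (fun hvd => hvk (hvd.trans hdk))]
  rw [hsecond]
  by_cases hkv : k = v
  · rw [if_pos hkv, if_pos hkv]; ring
  · rw [if_neg hkv, if_neg hkv]; ring
end

section
/- Let n be a positive integer and define U : ℕ → ℤ by U(d) = 1 if d = n, U(d) = −1 if n = 2d, and U(d) = 0 otherwise. Then for every positive divisor m of n, ∑_{k ∣ m} k·U(n/k) = (−1)^{m−1}. -/
open Finset

/-- the explicit function U (U(n) = 1, U(n/2) = −1 when n = 2d, else 0)
solves the system ∑_{k ∣ m} k·U(n/k) = (−1)^{m−1} for every positive divisor m of n. -/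
theorem explicit_solution_of_stratum_system
    (n : ℕ) (hn : 0 < n) (U : ℕ → ℤ)
    (hU : ∀ d : ℕ, U d = if d = n then 1 else if n = 2 * d then -1 else 0)
    (m : ℕ) (hm : m ∣ n) (hm0 : 0 < m) :
    ∑ k ∈ m.divisors, (k : ℤ) * U (n / k) = (-1) ^ (m - 1) := by
  have key : ∀ k ∈ m.divisors, (k : ℤ) * U (n / k) =
      (if k = 1 then (1:ℤ) else 0) + (if k = 2 then (-2:ℤ) else 0) := by
    intro k hk
    have hkm : k ∣ m := (Nat.mem_divisors.mp hk).1
    have hkn : k ∣ n := hkm.trans hm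
    have hk0 : 0 < k := Nat.pos_of_mem_divisors hk
    rw [hU]
    rcases eq_or_ne k 1 with h1 | h1
    · subst h1; simp
    rcases eq_or_ne k 2 with h2 | h2
    · subst h2
      have hne : n / 2 ≠ n := (Nat.div_lt_self hn (by norm_num)).ne
      have heq : n = 2 * (n / 2) := (Nat.mul_div_cancel' hkn).symm
      rw [if_neg hne, if_pos heq]
      norm_num
    · have hne : n / k ≠ n := by
        intro h
        rcases (Nat.div_eq_self).mp h with h0 | h0
        · exact hn.ne' h0
        · exact h1 h0
      have hne2 : n ≠ 2 * (n / k) := by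
        intro h
        have hmul : k * (n / k) = n := Nat.mul_div_cancel' hkn
        have hpos : 0 < n / k := Nat.div_pos (Nat.le_of_dvd hn hkn) hk0
        have : k * (n / k) = 2 * (n / k) := hmul.trans h
        exact h2 (Nat.eq_of_mul_eq_mul_right hpos this)
      rw [if_neg hne, if_neg hne2, if_neg h1, if_neg h2]
      ring
  rw [Finset.sum_congr rfl key, Finset.sum_add_distrib,
    Finset.sum_ite_eq' m.divisors 1 (fun _ => (1:ℤ)),
    Finset.sum_ite_eq' m.divisors 2 (fun _ => (-2:ℤ))]
  rw [if_pos (Nat.one_mem_divisors.mpr hm0.ne')]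
  rcases Nat.even_or_odd m with he | ho
  · have h2m : 2 ∈ m.divisors := Nat.mem_divisors.mpr ⟨he.two_dvd, hm0.ne'⟩
    have hodd : Odd (m - 1) := Nat.Even.sub_odd hm0 he odd_one
    rw [if_pos h2m, hodd.neg_one_pow]
    norm_num
  · have h2m : 2 ∉ m.divisors := by
      rw [Nat.mem_divisors]
      rintro ⟨hd, -⟩
      exact (Nat.not_even_iff_odd.mpr ho) ((even_iff_two_dvd).mpr hd)
    have heven : Even (m - 1) := Nat.Odd.sub_odd ho odd_one
    rw [if_neg h2m, heven.neg_one_pow]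
    norm_num
end

section
/- Let n be a positive integer and let U : ℕ → ℚ satisfy ∑_{k ∣ m} k·U(n/k) = (−1)^{m−1} for every positive divisor m of n. Then ∑_{d ∣ n} U(d) equals 1 if n is odd and equals 0 if n is even. Moreover U(n) = 1, U(n/2) = −1 when n is even, and U(d) = 0 for every other positive divisor d of n. -/
open Finset

theorem key_aux
    (n : ℕ) (hn : 0 < n) (U : ℕ → ℚ)
    (hU : ∀ m : ℕ, m ∣ n → 0 < m →
      ∑ k ∈ m.divisors, (k : ℚ) * U (n / k) = (-1) ^ (m - 1)) :
    ∀ m : ℕ, m ∣ n → U (n / m) = if m = 1 then 1 else if m = 2 then -1 else 0 := by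
  intro m
  induction m using Nat.strong_induction_on with
  | _ m ih =>
    intro hm
    have hm0 : 0 < m := Nat.pos_of_dvd_of_pos hm hn
    have hsum := hU m hm hm0
    rw [← Nat.cons_self_properDivisors hm0.ne', Finset.sum_cons] at hsum
    have hrw : ∑ k ∈ m.properDivisors, (k : ℚ) * U (n / k)
        = ∑ k ∈ m.properDivisors,
            ((if k = 1 then (1 : ℚ) else 0) + (if k = 2 then -2 else 0)) := by
      apply Finset.sum_congr rfl
      intro k hk
      obtain ⟨hkd, hklt⟩ := Nat.mem_properDivisors.mp hk
      rw [ih k hklt (hkd.trans hm)]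
      rcases eq_or_ne k 1 with rfl | h1
      · norm_num
      · rcases eq_or_ne k 2 with rfl | h2
        · norm_num
        · simp [h1, h2]
    rw [hrw, Finset.sum_add_distrib] at hsum
    simp only [Finset.sum_ite_eq' m.properDivisors 1 (fun _ => (1:ℚ)),
      Finset.sum_ite_eq' m.properDivisors 2 (fun _ => (-2:ℚ))] at hsum
    rcases eq_or_ne m 1 with rfl | hm1
    · simp only [if_pos rfl]
      simpa using hsum
    · rcases eq_or_ne m 2 with rfl | hm2
      · simp only [Nat.one_mem_properDivisors_iff_one_lt, Nat.mem_properDivisors] at hsum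
        norm_num at hsum
        rw [if_neg hm1, if_pos rfl]
        linarith
      · rw [if_neg hm1, if_neg hm2]
        have hm1lt : 1 < m := lt_of_le_of_ne hm0 (Ne.symm hm1)
        have h1mem : (1:ℕ) ∈ m.properDivisors :=
          Nat.one_mem_properDivisors_iff_one_lt.mpr hm1lt
        rcases Nat.even_or_odd m with he | ho
        · have h2lt : 2 < m := by
            rcases he with ⟨c, hc⟩; omega
          have h2mem : (2:ℕ) ∈ m.properDivisors :=
            Nat.mem_properDivisors.mpr ⟨he.two_dvd, h2lt⟩
          have hodd : Odd (m - 1) := Nat.Even.sub_odd hm0 he odd_one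
          rw [hodd.neg_one_pow, if_pos h1mem, if_pos h2mem] at hsum
          have hmne : (m : ℚ) ≠ 0 := Nat.cast_ne_zero.mpr hm0.ne'
          have hz : (m : ℚ) * U (n / m) = 0 := by linarith
          exact (mul_eq_zero.mp hz).resolve_left hmne
        · have h2mem : (2:ℕ) ∉ m.properDivisors := by
            intro h
            exact (Nat.not_even_iff_odd.mpr ho)
              ((even_iff_two_dvd).mpr (Nat.mem_properDivisors.mp h).1)
          have heven : Even (m - 1) := Nat.Odd.sub_odd ho odd_one
          rw [heven.neg_one_pow, if_pos h1mem, if_neg h2mem] at hsum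
          have hmne : (m : ℚ) ≠ 0 := Nat.cast_ne_zero.mpr hm0.ne'
          have hz : (m : ℚ) * U (n / m) = 0 := by linarith
          exact (mul_eq_zero.mp hz).resolve_left hmne

/-- any solution of the system ∑_{k ∣ m} k·U(n/k) = (−1)^{m−1}
(for all positive divisors m of n) satisfies U(n) = 1, U(n/2) = −1 when n is even,
U(d) = 0 for every other positive divisor d of n, and ∑_{d ∣ n} U(d) is 1 for odd n
and 0 for even n. -/
theorem stratum_system_solution_values
    (n : ℕ) (hn : 0 < n) (U : ℕ → ℚ)
    (hU : ∀ m : ℕ, m ∣ n → 0 < m →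
      ∑ k ∈ m.divisors, (k : ℚ) * U (n / k) = (-1) ^ (m - 1)) :
    (∑ d ∈ n.divisors, U d = if Odd n then 1 else 0) ∧
    U n = 1 ∧
    (Even n → U (n / 2) = -1) ∧
    (∀ d : ℕ, d ∣ n → 0 < d → d ≠ n → n ≠ 2 * d → U d = 0) := by
  have key := key_aux n hn U hU
  have hUn : U n = 1 := by
    have := key 1 (one_dvd n)
    simpa using this
  have hhalf : Even n → U (n / 2) = -1 := by
    intro he
    have := key 2 he.two_dvd
    simpa using this
  have hzero : ∀ d : ℕ, d ∣ n → 0 < d → d ≠ n → n ≠ 2 * d → U d = 0 := by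
    intro d hd hd0 hdn hn2d
    have hm : n / d ∣ n := Nat.div_dvd_of_dvd hd
    have hndd : n / (n / d) = d := Nat.div_div_self hd hn.ne'
    have h1 : n / d ≠ 1 := by
      intro h
      apply hdn
      have := Nat.eq_mul_of_div_eq_right hd h
      omega
    have h2 : n / d ≠ 2 := by
      intro h
      apply hn2d
      have := Nat.eq_mul_of_div_eq_right hd h
      omega
    have := key (n / d) hm
    rw [hndd, if_neg h1, if_neg h2] at this
    exact this
  refine ⟨?_, hUn, hhalf, hzero⟩
  rw [← Nat.sum_div_divisors n U]
  have hcongr : ∑ d ∈ n.divisors, U (n / d)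
      = ∑ d ∈ n.divisors, ((if d = 1 then (1:ℚ) else 0) + (if d = 2 then -1 else 0)) := by
    apply Finset.sum_congr rfl
    intro d hd
    rw [key d (Nat.dvd_of_mem_divisors hd)]
    split_ifs with g1 g2 <;> simp_all
  rw [hcongr, Finset.sum_add_distrib]
  simp only [Finset.sum_ite_eq' n.divisors 1 (fun _ => (1:ℚ)),
    Finset.sum_ite_eq' n.divisors 2 (fun _ => (-1:ℚ))]
  have h1mem : (1:ℕ) ∈ n.divisors := Nat.one_mem_divisors.mpr hn.ne'
  rw [if_pos h1mem]
  rcases Nat.even_or_odd n with he | ho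
  · have h2mem : (2:ℕ) ∈ n.divisors := Nat.mem_divisors.mpr ⟨he.two_dvd, hn.ne'⟩
    rw [if_pos h2mem, if_neg (Nat.not_odd_iff_even.mpr he)]
    ring
  · have h2mem : (2:ℕ) ∉ n.divisors := by
      intro h
      exact (Nat.not_even_iff_odd.mpr ho) ((even_iff_two_dvd).mpr (Nat.mem_divisors.mp h).1)
    rw [if_neg h2mem, if_pos ho]
    ring
end

section
/- For every integer g ≥ 2, all rationals a, b, c, and every integer n > 2g + 2, n! times the coefficient of t^n in f(t) equals (−1)^{n+1}·(2g−3+n)! / ((2g−3)!·4g(2g+1)(2g+2)). -/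
open PowerSeries

lemma coeff_inv_one_add_pow (m n : ℕ) :
    coeff n (((1 + X : ℚ⟦X⟧) ^ (m + 1))⁻¹) = (-1) ^ n * ((m + n).choose m : ℚ) := by
  have hT : ((1 + X : ℚ⟦X⟧) ^ (m + 1))⁻¹
      = rescale (-1) (invOneSubPow ℚ (m + 1)).val := by
    rw [PowerSeries.inv_eq_iff_mul_eq_one]
    · have h1 : (1 + X : ℚ⟦X⟧) ^ (m + 1) = rescale (-1) ((1 - X : ℚ⟦X⟧) ^ (m + 1)) := by
        rw [map_pow, map_sub, map_one, rescale_X, map_neg, map_one, neg_one_mul, sub_neg_eq_add]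
      rw [h1, ← map_mul, mul_comm]
      have := (invOneSubPow ℚ (m + 1)).inv_val
      rw [invOneSubPow_inv_eq_one_sub_pow] at this
      rw [this, map_one]
    · simp
  rw [hT, coeff_rescale, invOneSubPow_val_succ_eq_mk_add_choose, coeff_mk]

lemma coeff_one_add_X_pow_eq_zero {k n : ℕ} (h : k < n) :
    coeff n ((1 + X : ℚ⟦X⟧) ^ k) = 0 := by
  rw [add_comm, add_pow]
  simp only [one_pow, mul_one, map_sum]
  rw [Finset.sum_eq_zero]
  intro i hi
  rw [Finset.mem_range] at hi
  rw [show ((k.choose i : ℕ) : ℚ⟦X⟧) = (C : ℚ →+* ℚ⟦X⟧) ((k.choose i : ℕ) : ℚ) from (map_natCast (C : ℚ →+* ℚ⟦X⟧) _).symm,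
    coeff_mul_C, coeff_X_pow, if_neg (by omega), zero_mul]

/-- for n > 2g+2, n!·[tⁿ]f equals
(−1)^{n+1}·(2g−3+n)!/((2g−3)!·4g(2g+1)(2g+2)), where f is the generating
function of Lemma 2. -/
theorem euler_char_Hgn_stable_range
    (g : ℕ) (hg : 2 ≤ g) (a b c d : ℚ)
    (hd : d = -1 / (4 * (g : ℚ) * (2 * g + 1) * (2 * g + 2)))
    (f : PowerSeries ℚ)
    (hf : f = C d * ((1 + X) ^ (2 * g - 2))⁻¹ + C a + C b * (1 + X)
        + C c * (1 + X) ^ 2 + C b * (1 + X) ^ 3 + C a * (1 + X) ^ 4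
        + C d * (1 + X) ^ (2 + 2 * g))
    (n : ℕ) (hn : 2 * g + 2 < n) :
    (n.factorial : ℚ) * coeff n f =
      (-1) ^ (n + 1) * ((2 * g - 3 + n).factorial : ℚ) /
        (((2 * g - 3).factorial : ℚ) * (4 * (g : ℚ) * (2 * g + 1) * (2 * g + 2))) := by
  have hm : 2 * g - 2 = (2 * g - 3) + 1 := by omega
  have hn0 : n ≠ 0 := by omega
  have hn1 : n ≠ 1 := by omega
  have h1 : coeff n (((1 + X : ℚ⟦X⟧) ^ (2 * g - 2))⁻¹)
      = (-1) ^ n * ((2 * g - 3 + n).choose (2 * g - 3) : ℚ) := by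
    rw [hm, coeff_inv_one_add_pow]
  subst hf
  simp only [map_add, coeff_C_mul, h1,
    coeff_one_add_X_pow_eq_zero (show 2 < n by omega),
    coeff_one_add_X_pow_eq_zero (show 3 < n by omega),
    coeff_one_add_X_pow_eq_zero (show 4 < n by omega),
    coeff_one_add_X_pow_eq_zero (show 2 + 2 * g < n by omega),
    coeff_one, coeff_X, coeff_C, if_neg hn0, if_neg hn1, mul_zero, add_zero, zero_add]
  have hch : ((2 * g - 3 + n).choose (2 * g - 3) : ℚ) * ((2 * g - 3).factorial : ℚ)
      * (n.factorial : ℚ) = ((2 * g - 3 + n).factorial : ℚ) := by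
    rw [show (2 * g - 3 + n).choose (2 * g - 3) = (2 * g - 3 + n).choose n by
      rw [← Nat.choose_symm (by omega : n ≤ 2 * g - 3 + n)]; congr 1; omega]
    exact_mod_cast congrArg (Nat.cast : ℕ → ℚ)
      (Nat.add_choose_mul_factorial_mul_factorial (2 * g - 3) n)
  have hD : (4 * (g : ℚ) * (2 * g + 1) * (2 * g + 2)) ≠ 0 := by
    have : (0:ℚ) < (g:ℚ) := by exact_mod_cast (by omega : 0 < g)
    positivity
  have hfac : ((2 * g - 3).factorial : ℚ) ≠ 0 := by
    exact_mod_cast (2 * g - 3).factorial_ne_zero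
  subst hd
  field_simp
  linear_combination (-(-1:ℚ)^n) * hch
end

section
/- For every integer g ≥ 2 and all rationals a, b, c, if the constant coefficient of f(t) equals 1 (equivalently, 2a + 2b + c + 2d = 1), then 3! times the coefficient of t³ in f equals 3·(2! times the coefficient of t² in f) − 6; that is, χ(H_{g,3}) = 3·χ(H_{g,2}) − 6 for the values read off from the generating function (4). -/
open PowerSeries

lemma coeff_one_add_X_pow (m n : ℕ) :
    coeff n ((1 + X : PowerSeries ℚ) ^ m) = m.choose n := by
  rw [add_comm, add_pow]
  simp only [one_pow, mul_one, map_sum]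
  have : ∀ k ∈ Finset.range (m+1),
      coeff n ((X : PowerSeries ℚ) ^ k * (m.choose k : PowerSeries ℚ))
        = if n = k then (m.choose k : ℚ) else 0 := by
    intro k _
    rw [mul_comm, ← map_natCast (C (R := ℚ)), coeff_C_mul, coeff_X_pow]
    split <;> simp
  rw [Finset.sum_congr rfl this, Finset.sum_ite_eq (Finset.range (m+1)) n]
  split
  · rfl
  · next h =>
      have : m < n := by
        by_contra hmn
        exact h (Finset.mem_range.mpr (by omega))
      simp [Nat.choose_eq_zero_of_lt this]

lemma cast_choose_three (n : ℕ) : ((n.choose 3 : ℕ) : ℚ) = n * ((n:ℚ)-1) * ((n:ℚ)-2) / 6 := by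
  induction n with
  | zero => simp
  | succ n ih =>
      rw [Nat.choose_succ_succ]
      push_cast [ih, Nat.cast_choose_two]
      ring

/-- if the constant coefficient of the generating function f of Lemma 2
equals 1 (i.e. 2a + 2b + c + 2d = 1), then 3!·[t³]f = 3·(2!·[t²]f) − 6, i.e.
χ(H_{g,3}) = 3·χ(H_{g,2}) − 6. -/
theorem euler_char_Hg3_from_Hg2
    (g : ℕ) (hg : 2 ≤ g) (a b c d : ℚ)
    (hd : d = -1 / (4 * (g : ℚ) * (2 * g + 1) * (2 * g + 2)))
    (f : PowerSeries ℚ)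
    (hf : f = C d * ((1 + X) ^ (2 * g - 2))⁻¹ + C a + C b * (1 + X)
        + C c * (1 + X) ^ 2 + C b * (1 + X) ^ 3 + C a * (1 + X) ^ 4
        + C d * (1 + X) ^ (2 + 2 * g))
    (h0 : coeff 0 f = 1) :
    ((3).factorial : ℚ) * coeff 3 f = 3 * (((2).factorial : ℚ) * coeff 2 f) - 6 := by
  obtain ⟨k, rfl⟩ : ∃ k, g = k + 2 := ⟨g - 2, by omega⟩
  have hm : 2 * (k + 2) - 2 = 2 * k + 2 := by omega
  rw [hm] at hf
  have hne : constantCoeff ((1 + X : PowerSeries ℚ) ^ (2 * k + 2)) ≠ 0 := by simp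
  set u := ((1 + X : PowerSeries ℚ) ^ (2 * k + 2))⁻¹ with hu
  have hmul : u * (1 + X : PowerSeries ℚ) ^ (2 * k + 2) = 1 :=
    PowerSeries.inv_mul_cancel _ hne
  have E0 := congrArg (coeff 0) hmul
  have E1 := congrArg (coeff 1) hmul
  have E2 := congrArg (coeff 2) hmul
  have E3 := congrArg (coeff 3) hmul
  simp [coeff_mul, Finset.Nat.sum_antidiagonal_eq_sum_range_succ_mk,
    Finset.sum_range_succ, coeff_one_add_X_pow] at E0 E1 E2 E3
  rw [hf] at h0 ⊢
  simp [coeff_one_add_X_pow] at h0 ⊢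
  have hA2 : (((2*k+2).choose 2 : ℕ) : ℚ) = (2*(k:ℚ)+2)*(2*(k:ℚ)+1)/2 := by
    rw [Nat.cast_choose_two]; push_cast; ring
  have hA3 : (((2*k+2).choose 3 : ℕ) : ℚ) = (2*(k:ℚ)+2)*(2*(k:ℚ)+1)*(2*(k:ℚ))/6 := by
    rw [cast_choose_three]; push_cast; ring
  have hB : 2 + 2*(k+2) = 2*k+6 := by omega
  rw [hB] at *
  have hB2 : (((2*k+6).choose 2 : ℕ) : ℚ) = (2*(k:ℚ)+6)*(2*(k:ℚ)+5)/2 := by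
    rw [Nat.cast_choose_two]; push_cast; ring
  have hB3 : (((2*k+6).choose 3 : ℕ) : ℚ) = (2*(k:ℚ)+6)*(2*(k:ℚ)+5)*(2*(k:ℚ)+4)/6 := by
    rw [cast_choose_three]; push_cast; ring
  have h42 : ((Nat.choose 4 2 : ℕ) : ℚ) = 6 := by norm_num [Nat.choose]
  have hX2 : coeff 2 (X : PowerSeries ℚ) = 0 := by simp [PowerSeries.coeff_X]
  have hX3 : coeff 3 (X : PowerSeries ℚ) = 0 := by simp [PowerSeries.coeff_X]
  rw [hA2] at E2 E3
  rw [hA3] at E3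
  rw [hB2, hB3, h42, hX2, hX3, Nat.factorial]
  norm_num
  linear_combination (-6 : ℚ)*h0 + (6*d)*E3 + (-6*d*(2*(k:ℚ)+3))*E2
    + (3*d*(2*(k:ℚ)+2)*(2*(k:ℚ)+5))*E1
    + (6*d - d*(2*(k:ℚ)+2)*(2*(k:ℚ)+3)*(2*(k:ℚ)+7))*E0
end
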